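/- Let Θ be a compact metric space, (Ω, ℱ, μ) a probability space, T : Ω → Ω an ergodic measure-preserving map, and θ₀ ∈ Θ. Let l : Ω × Θ → ℝ be such that: (i) for μ-almost every ω, θ ↦ l(ω, θ) is continuous; (ii) there is a constant m ∈ ℝ with l(ω, θ) ≥ m for all θ and a.e. ω; (iii) 𝔼[|l(·, θ₀)|] < ∞; (iv) for every θ ≠ θ₀, 𝔼[l(·, θ)] > 𝔼[l(·, θ₀)] (where the left-hand side may equal +∞). Let (l̂_t)_{t≥1} be random functions on Θ, continuous in θ, such that sup_{θ∈Θ} (1/n) Σ_{t=1}^{n} |l̂_t(ω, θ) − l(Tᵗω, θ)| → 0 almost surely as n → ∞. Then any sequence of measurable minimizers θ̂_n(ω) ∈ argmin_{θ∈Θ} Σ_{t=1}^{n} l̂_t(ω, θ) converges almost surely to θ₀. -/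

import Mathlib

open MeasureTheory Filter
set_option linter.unusedSectionVars false
set_option linter.unusedVariables false
set_option linter.unnecessarySimpa false

section Birkhoff
variable {Ω : Type*} [MeasurableSpace Ω] {μ : Measure Ω} [IsProbabilityMeasure μ] {T : Ω → Ω}
  {g : Ω → ℝ}

noncomputable def maxS (T : Ω → Ω) (g : Ω → ℝ) : ℕ → Ω → ℝ
  | 0 => fun _ => 0
  | (N+1) => fun ω => max (maxS T g N ω) (birkhoffSum T g (N+1) ω)

lemma maxS_nonneg (N : ℕ) (ω : Ω) : 0 ≤ maxS T g N ω := by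
  induction N with
  | zero => simp [maxS]
  | succ N ih => exact le_trans ih (le_max_left _ _)

lemma maxS_mono (ω : Ω) : Monotone fun N => maxS T g N ω :=
  monotone_nat_of_le_succ fun N => le_max_left _ _

lemma birkhoffSum_le_maxS {n N : ℕ} (hn : n ≤ N) (ω : Ω) :
    birkhoffSum T g n ω ≤ maxS T g N ω := by
  induction N with
  | zero =>
    have : n = 0 := Nat.le_zero.mp hn
    simp [this, birkhoffSum_zero, maxS_nonneg]
  | succ N ih =>
    rcases Nat.lt_or_ge n (N+1) with h | h
    · exact (ih (Nat.lt_succ_iff.mp h)).trans (le_max_left _ _)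
    · have : n = N + 1 := le_antisymm hn h
      rw [this, maxS]
      exact le_max_right _ _

lemma maxS_eq_birkhoffSum {N : ℕ} {ω : Ω} (h : 0 < maxS T g N ω) :
    ∃ n, 1 ≤ n ∧ n ≤ N ∧ maxS T g N ω = birkhoffSum T g n ω := by
  induction N with
  | zero => simp [maxS] at h
  | succ N ih =>
    rw [maxS] at h ⊢
    rcases max_cases (maxS T g N ω) (birkhoffSum T g (N+1) ω) with ⟨h1, h2⟩ | ⟨h1, h2⟩
    · obtain ⟨n, hn1, hn2, hn3⟩ := ih (h1 ▸ h)
      exact ⟨n, hn1, hn2.trans (Nat.le_succ N), h1.trans hn3⟩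
    · exact ⟨N+1, Nat.le_add_left 1 N, le_refl _, h1⟩

lemma birkhoffSum_measurable (hT : Measurable T) (hg : Measurable g) (n : ℕ) :
    Measurable (birkhoffSum T g n) :=
  Finset.measurable_sum _ fun k _ => hg.comp (hT.iterate k)

lemma maxS_measurable (hT : Measurable T) (hg : Measurable g) (N : ℕ) :
    Measurable (maxS T g N) := by
  induction N with
  | zero => simpa [maxS] using measurable_const
  | succ N ih => exact ih.max (birkhoffSum_measurable hT hg (N+1))

lemma birkhoffSum_integrable (hT : MeasurePreserving T μ μ) (hg : Measurable g)
    (hgi : Integrable g μ) (n : ℕ) : Integrable (birkhoffSum T g n) μ := by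
  refine integrable_finset_sum _ fun k _ => ?_
  exact (hT.iterate k).integrable_comp hgi.aestronglyMeasurable |>.mpr hgi

lemma maxS_integrable (hT : MeasurePreserving T μ μ) (hg : Measurable g)
    (hgi : Integrable g μ) (N : ℕ) : Integrable (maxS T g N) μ := by
  induction N with
  | zero => simpa [maxS] using integrable_const (0:ℝ)
  | succ N ih =>
    have h2 : maxS T g (N+1) = (maxS T g N ⊔ birkhoffSum T g (N+1)) := by
      funext ω; simp only [maxS, Pi.sup_apply]
    rw [h2]
    exact ih.sup (birkhoffSum_integrable hT hg hgi (N+1))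

end Birkhoff

section MET
variable {Ω : Type*} [MeasurableSpace Ω] {μ : Measure Ω} [IsProbabilityMeasure μ] {T : Ω → Ω}
  {g : Ω → ℝ}

lemma integral_comp_mp (hT : MeasurePreserving T μ μ) {h : Ω → ℝ}
    (hm : AEStronglyMeasurable h μ) : ∫ ω, h (T ω) ∂μ = ∫ ω, h ω ∂μ := by
  rw [← integral_map hT.measurable.aemeasurable]
  · rw [hT.map_eq]
  · rw [hT.map_eq]; exact hm

lemma maximal_ergodic (hT : MeasurePreserving T μ μ) (hg : Measurable g)
    (hgi : Integrable g μ) :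
    0 ≤ ∫ ω in {ω | ∃ n, 1 ≤ n ∧ 0 < birkhoffSum T g n ω}, g ω ∂μ := by
  set A : ℕ → Set Ω := fun N => {ω | 0 < maxS T g N ω} with hA
  have hAmeas : ∀ N, MeasurableSet (A N) :=
    fun N => measurableSet_lt measurable_const (maxS_measurable hT.measurable hg N)
  -- step 1 : each N
  have step1 : ∀ N, 0 ≤ ∫ ω in A N, g ω ∂μ := by
    intro N
    set h : Ω → ℝ := fun ω => maxS T g N ω - maxS T g N (T ω) with hh
    have hMi := maxS_integrable hT hg hgi N
    have hMTi : Integrable (fun ω => maxS T g N (T ω)) μ :=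
      (hT.integrable_comp hMi.aestronglyMeasurable).mpr hMi
    have hhi : Integrable h μ := hMi.sub hMTi
    have key : ∀ ω ∈ A N, h ω ≤ g ω := by
      intro ω hω
      obtain ⟨n, hn1, hn2, hn3⟩ := maxS_eq_birkhoffSum hω
      obtain ⟨k, rfl⟩ := Nat.exists_eq_add_of_le hn1
      rw [hh]
      simp only
      rw [hn3, Nat.add_comm 1 k, birkhoffSum_succ' T g k ω]
      have : birkhoffSum T g k (T ω) ≤ maxS T g N (T ω) := by
        refine birkhoffSum_le_maxS ?_ (T ω)
        omega
      linarith
    have key2 : ∀ ω ∈ (A N)ᶜ, h ω ≤ 0 := by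
      intro ω hω
      have h0 : maxS T g N ω = 0 :=
        le_antisymm (not_lt.mp hω) (maxS_nonneg N ω)
      rw [hh]; simp only
      rw [h0]
      have := maxS_nonneg (T := T) (g := g) N (T ω)
      linarith
    have hint0 : ∫ ω, h ω ∂μ = 0 := by
      rw [hh]
      rw [integral_sub hMi hMTi]
      rw [integral_comp_mp hT hMi.aestronglyMeasurable]
      ring
    have h1 : ∫ ω in A N, h ω ∂μ ≤ ∫ ω in A N, g ω ∂μ :=
      setIntegral_mono_on (hhi.integrableOn) (hgi.integrableOn) (hAmeas N) key
    have h2 : ∫ ω in (A N)ᶜ, h ω ∂μ ≤ 0 :=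
      setIntegral_nonpos (hAmeas N).compl key2
    have h3 := integral_add_compl (hAmeas N) hhi
    linarith
  -- step 2 : pass to the limit
  have hmono : Monotone A := fun N M hNM ω hω => lt_of_lt_of_le hω (maxS_mono ω hNM)
  have hunion : (⋃ N, A N) = {ω | ∃ n, 1 ≤ n ∧ 0 < birkhoffSum T g n ω} := by
    ext ω
    simp only [Set.mem_iUnion, Set.mem_setOf_eq, hA]
    constructor
    · rintro ⟨N, hN⟩
      obtain ⟨n, hn1, hn2, hn3⟩ := maxS_eq_birkhoffSum hN
      exact ⟨n, hn1, hn3 ▸ hN⟩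
    · rintro ⟨n, hn1, hn2⟩
      exact ⟨n, lt_of_lt_of_le hn2 (birkhoffSum_le_maxS le_rfl ω)⟩
  have := tendsto_setIntegral_of_monotone hAmeas hmono (hgi.integrableOn)
  rw [hunion] at this
  exact ge_of_tendsto this (Eventually.of_forall step1)

end MET

section BirkhoffMain
variable {Ω : Type*} [MeasurableSpace Ω] {μ : Measure Ω} [IsProbabilityMeasure μ] {T : Ω → Ω}

lemma frequently_succ_shift {p : ℕ → Prop} (h : ∃ᶠ n in atTop, p (n+1)) :
    ∃ᶠ n in atTop, p n := by
  rw [frequently_atTop] at h ⊢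
  intro a
  obtain ⟨b, hb, hpb⟩ := h a
  exact ⟨b+1, le_trans hb (Nat.le_succ b), hpb⟩

lemma frequently_pred_shift {p : ℕ → Prop} (h : ∃ᶠ n in atTop, 1 ≤ n ∧ p (n-1)) :
    ∃ᶠ n in atTop, p n := by
  rw [frequently_atTop] at h ⊢
  intro a
  obtain ⟨b, hb, hb1, hpb⟩ := h (a+1)
  exact ⟨b-1, by omega, hpb⟩

lemma birkhoff_upper (hT : Ergodic T μ) {f : Ω → ℝ} (hfm : Measurable f)
    (hfi : Integrable f μ) {a : ℝ} (ha : ∫ ω, f ω ∂μ < a) :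
    ∀ᵐ ω ∂μ, ∀ q : ℚ, a < (q:ℝ) → ∀ᶠ n in atTop, birkhoffSum T f n ω ≤ (q:ℝ) * n := by
  set E : Set Ω := {ω | ∃ q : ℚ, a < (q:ℝ) ∧ ∃ᶠ n in atTop, (q:ℝ) * n < birkhoffSum T f n ω}
    with hE
  have hS : ∀ n ω, birkhoffSum T f n (T ω) = birkhoffSum T f (n+1) ω - f ω := by
    intro n ω
    rw [birkhoffSum_succ' T f n ω]; ring
  have hEmeas : MeasurableSet E := by
    have : E = ⋃ q : ℚ, ⋃ (_ : a < (q:ℝ)), ⋂ N : ℕ, ⋃ n : ℕ, ⋃ (_ : N ≤ n),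
        {ω | (q:ℝ) * n < birkhoffSum T f n ω} := by
      ext ω
      simp only [hE, Set.mem_setOf_eq, Set.mem_iUnion, Set.mem_iInter, frequently_atTop]
      constructor
      · rintro ⟨q, hq, h⟩; exact ⟨q, hq, fun N => by obtain ⟨b, hb, h2⟩ := h N; exact ⟨b, hb, h2⟩⟩
      · rintro ⟨q, hq, h⟩; exact ⟨q, hq, fun N => by obtain ⟨b, hb, h2⟩ := h N; exact ⟨b, hb, h2⟩⟩
    rw [this]
    refine MeasurableSet.iUnion fun q => MeasurableSet.iUnion fun _ =>
      MeasurableSet.iInter fun N => MeasurableSet.iUnion fun n => MeasurableSet.iUnion fun _ => ?_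
    exact measurableSet_lt measurable_const (birkhoffSum_measurable hT.measurable hfm n)
  have hinv : T ⁻¹' E = E := by
    ext ω
    simp only [Set.mem_preimage, hE, Set.mem_setOf_eq]
    constructor
    · rintro ⟨q, hq, hfreq⟩
      obtain ⟨q', hq'1, hq'2⟩ := exists_rat_btwn hq
      refine ⟨q', hq'1, ?_⟩
      have hev : ∀ᶠ n : ℕ in atTop, (q':ℝ) * (n+1) ≤ (q:ℝ) * n + f ω := by
        have hlim : Tendsto (fun n : ℕ => ((q:ℝ) - q') * n) atTop atTop :=
          (tendsto_natCast_atTop_atTop).const_mul_atTop (by exact_mod_cast sub_pos.mpr hq'2)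
        have := hlim.eventually_ge_atTop ((q':ℝ) - f ω)
        filter_upwards [this] with n hn
        nlinarith [hn]
      have : ∃ᶠ n : ℕ in atTop, (q':ℝ) * (n+1) < birkhoffSum T f (n+1) ω := by
        refine (hfreq.and_eventually hev).mono ?_
        rintro n ⟨h1, h2⟩
        rw [hS n ω] at h1
        push_cast
        linarith
      exact frequently_succ_shift (p := fun n => (q':ℝ) * n < birkhoffSum T f n ω)
        (by simpa using this)
    · rintro ⟨q, hq, hfreq⟩
      obtain ⟨q', hq'1, hq'2⟩ := exists_rat_btwn hq
      refine ⟨q', hq'1, ?_⟩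
      have hev : ∀ᶠ n : ℕ in atTop, 1 ≤ n ∧ (q':ℝ) * (n-1:ℕ) ≤ (q:ℝ) * n - f ω := by
        have hlim : Tendsto (fun n : ℕ => ((q:ℝ) - q') * n) atTop atTop :=
          (tendsto_natCast_atTop_atTop).const_mul_atTop (by exact_mod_cast sub_pos.mpr hq'2)
        have h2 := hlim.eventually_ge_atTop (f ω - (q':ℝ))
        filter_upwards [h2, eventually_ge_atTop 1] with n hn hn1
        refine ⟨hn1, ?_⟩
        have : ((n:ℝ) - 1) = ((n-1:ℕ):ℝ) := by
          push_cast [Nat.cast_sub hn1]; ring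
        rw [← this]
        nlinarith [hn]
      refine frequently_pred_shift (p := fun n => (q':ℝ) * n < birkhoffSum T f n (T ω)) ?_
      refine (hfreq.and_eventually hev).mono ?_
      rintro n ⟨h1, hn1, h2⟩
      refine ⟨hn1, ?_⟩
      have hrec : birkhoffSum T f (n-1) (T ω) = birkhoffSum T f n ω - f ω := by
        have := hS (n-1) ω
        rwa [Nat.sub_add_cancel hn1] at this
      show (q':ℝ) * (n-1:ℕ) < birkhoffSum T f (n-1) (T ω)
      rw [hrec]
      linarith
  rcases hT.prob_eq_zero_or_one hEmeas hinv with h0 | h1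
  · -- μ E = 0 : done
    have : ∀ᵐ ω ∂μ, ω ∉ E := by
      rw [ae_iff]
      simpa using h0
    filter_upwards [this] with ω hω q hq
    rw [hE, Set.mem_setOf_eq] at hω
    push_neg at hω
    have := hω q hq
    exact this
  · -- μ E = 1 : contradiction with maximal ergodic theorem
    exfalso
    set g : Ω → ℝ := fun ω => f ω - a with hg
    have hgm : Measurable g := hfm.sub measurable_const
    have hgi : Integrable g μ := hfi.sub (integrable_const a)
    set B : Set Ω := {ω | ∃ n, 1 ≤ n ∧ 0 < birkhoffSum T g n ω} with hB
    have hBmeas : MeasurableSet B := by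
      have : B = ⋃ n : ℕ, ⋃ (_ : 1 ≤ n), {ω | 0 < birkhoffSum T g n ω} := by
        ext ω; simp [hB]
      rw [this]
      exact MeasurableSet.iUnion fun n => MeasurableSet.iUnion fun _ =>
        measurableSet_lt measurable_const (birkhoffSum_measurable hT.measurable hgm n)
    have hEB : E ⊆ B := by
      intro ω hω
      obtain ⟨q, hq, hfreq⟩ := hω
      obtain ⟨n, hn1, hn2⟩ := frequently_atTop.mp hfreq 1
      refine ⟨n, hn1, ?_⟩
      have hsum : birkhoffSum T g n ω = birkhoffSum T f n ω - n * a := by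
        simp only [hg, birkhoffSum, Finset.sum_sub_distrib, Finset.sum_const,
          Finset.card_range, nsmul_eq_mul]
      rw [hsum]
      have h1 : (a:ℝ) * n ≤ (q:ℝ) * n := by
        have : (1:ℝ) ≤ n := by exact_mod_cast hn1
        nlinarith [hq.le]
      nlinarith [hn2]
    have hBone : μ B = 1 := by
      have h2 : μ E ≤ μ B := measure_mono hEB
      rw [h1] at h2
      exact le_antisymm prob_le_one h2
    have hBc : μ Bᶜ = 0 := by
      rw [measure_compl hBmeas (measure_ne_top μ B), hBone]
      simp
    have hME := maximal_ergodic hT.toMeasurePreserving hgm hgi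
    rw [← hB] at hME
    have hsplit := integral_add_compl hBmeas hgi
    have hBc0 : ∫ ω in Bᶜ, g ω ∂μ = 0 := by
      rw [Measure.restrict_eq_zero.mpr hBc, integral_zero_measure]
    have hg_int : ∫ ω, g ω ∂μ = ∫ ω, f ω ∂μ - a := by
      rw [hg]
      rw [integral_sub hfi (integrable_const a)]
      simp
    -- 0 ≤ ∫_B g = ∫ g = ∫ f - a < 0
    have : (0:ℝ) ≤ ∫ ω, f ω ∂μ - a := by
      rw [← hg_int, ← hsplit, hBc0]
      simpa using hME
    linarith
end BirkhoffMain

section Main2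
variable {Ω : Type*} [MeasurableSpace Ω] {μ : Measure Ω} [IsProbabilityMeasure μ] {T : Ω → Ω}

theorem birkhoff_ergodic (hT : Ergodic T μ) {f : Ω → ℝ} (hfm : Measurable f)
    (hfi : Integrable f μ) :
    ∀ᵐ ω ∂μ, Tendsto (fun n : ℕ => (n:ℝ)⁻¹ * birkhoffSum T f n ω) atTop (nhds (∫ ω, f ω ∂μ)) := by
  set I := ∫ ω, f ω ∂μ with hI
  have hup : ∀ᵐ ω ∂μ, ∀ j : ℕ, ∀ q : ℚ, I + 1/(j+1) < (q:ℝ) →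
      ∀ᶠ n : ℕ in atTop, birkhoffSum T f n ω ≤ (q:ℝ) * n := by
    rw [ae_all_iff]
    intro j
    have hpos : (0:ℝ) < 1/((j:ℝ)+1) := by positivity
    exact birkhoff_upper hT hfm hfi (by rw [← hI]; linarith)
  have hdown : ∀ᵐ ω ∂μ, ∀ j : ℕ, ∀ q : ℚ, -I + 1/(j+1) < (q:ℝ) →
      ∀ᶠ n : ℕ in atTop, birkhoffSum T (fun ω => -f ω) n ω ≤ (q:ℝ) * n := by
    rw [ae_all_iff]
    intro j
    have hpos : (0:ℝ) < 1/((j:ℝ)+1) := by positivity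
    have hnegI : ∫ ω, -f ω ∂μ = -I := by rw [integral_neg]
    exact birkhoff_upper hT hfm.neg hfi.neg (a := -I + 1/(j+1))
      (by show ∫ ω, -f ω ∂μ < _; rw [hnegI]; linarith)
  filter_upwards [hup, hdown] with ω h1 h2
  rw [tendsto_order]
  constructor
  · -- ∀ b < I, eventually b < n⁻¹ * S_n
    intro b hb
    obtain ⟨j, hj⟩ := exists_nat_one_div_lt (show (0:ℝ) < I - b by linarith)
    obtain ⟨q, hq1, hq2⟩ := exists_rat_btwn (show -I + 1/(j+1) < -b by linarith)
    have := h2 j q hq1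
    have hSneg : ∀ n, birkhoffSum T (fun ω => -f ω) n ω = -birkhoffSum T f n ω := by
      intro n; simp [birkhoffSum, Finset.sum_neg_distrib]
    filter_upwards [this, eventually_ge_atTop 1] with n hn hn1
    rw [hSneg n] at hn
    have hnpos : (0:ℝ) < n := by exact_mod_cast hn1
    rw [lt_inv_mul_iff₀ hnpos]
    have : -(q:ℝ) * n ≤ birkhoffSum T f n ω := by linarith
    have hbq : b < -(q:ℝ) := by linarith
    nlinarith
  · intro b hb
    obtain ⟨j, hj⟩ := exists_nat_one_div_lt (show (0:ℝ) < b - I by linarith)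
    obtain ⟨q, hq1, hq2⟩ := exists_rat_btwn (show I + 1/(j+1) < b by linarith)
    have := h1 j q hq1
    filter_upwards [this, eventually_ge_atTop 1] with n hn hn1
    have hnpos : (0:ℝ) < n := by exact_mod_cast hn1
    rw [inv_mul_lt_iff₀ hnpos]
    nlinarith

lemma ae_comp_iterate (hT : MeasurePreserving T μ μ) {p : Ω → Prop} (h : ∀ᵐ ω ∂μ, p ω)
    (t : ℕ) : ∀ᵐ ω ∂μ, p (T^[t] ω) := by
  set N := toMeasurable μ {ω | ¬ p ω} with hN
  have hNmeas : MeasurableSet N := measurableSet_toMeasurable μ _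
  have hN0 : μ N = 0 := by
    rw [hN, measure_toMeasurable]
    exact h
  have hpre : μ (T^[t] ⁻¹' N) = 0 := by
    rw [(hT.iterate t).measure_preimage hNmeas.nullMeasurableSet]
    exact hN0
  rw [ae_iff]
  refine measure_mono_null ?_ hpre
  intro ω hω
  exact subset_toMeasurable μ _ hω

theorem birkhoff_shifted (hT : Ergodic T μ) {f : Ω → ℝ} (hfm : Measurable f)
    (hfi : Integrable f μ) :
    ∀ᵐ ω ∂μ, Tendsto (fun n : ℕ => (n:ℝ)⁻¹ * ∑ t ∈ Finset.Icc 1 n, f (T^[t] ω)) atTop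
      (nhds (∫ ω, f ω ∂μ)) := by
  have h := birkhoff_ergodic hT hfm hfi
  have h2 := ae_comp_iterate hT.toMeasurePreserving h 1
  simp only [Function.iterate_one] at h2
  filter_upwards [h2] with ω hω
  have heq : ∀ n, ∑ t ∈ Finset.Icc 1 n, f (T^[t] ω) = birkhoffSum T f n (T ω) := by
    intro n
    rw [birkhoffSum]
    rw [← Finset.Ico_add_one_right_eq_Icc, Finset.sum_Ico_eq_sum_range]
    refine Finset.sum_congr rfl fun k _ => ?_
    rw [Nat.add_comm 1 k, Function.iterate_add_apply, Function.iterate_one]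
  have : (fun n : ℕ => (n:ℝ)⁻¹ * ∑ t ∈ Finset.Icc 1 n, f (T^[t] ω))
      = fun n : ℕ => (n:ℝ)⁻¹ * birkhoffSum T f n (T ω) := by
    funext n; rw [heq]
  rw [this]
  exact hω

end Main2

section Wald
open ENNReal
variable {Θ : Type*} [MetricSpace Θ] {Ω : Type*} [MeasurableSpace Ω] {μ : Measure Ω}
  [IsProbabilityMeasure μ]

lemma ennreal_iSup_inf_nat (a : ℝ≥0∞) : ⨆ K : ℕ, a ⊓ (K : ℝ≥0∞) = a := by
  apply le_antisymm (iSup_le fun K => inf_le_left)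
  rcases eq_or_ne a ⊤ with rfl | ha
  · have : ∀ K : ℕ, (⊤ : ℝ≥0∞) ⊓ (K:ℝ≥0∞) = (K:ℝ≥0∞) := fun K => top_inf_eq _
    calc (⊤:ℝ≥0∞) = ⨆ K : ℕ, (K:ℝ≥0∞) := (ENNReal.iSup_natCast).symm
      _ ≤ ⨆ K : ℕ, (⊤:ℝ≥0∞) ⊓ (K:ℝ≥0∞) := by simp [this]
  · obtain ⟨K, hK⟩ := exists_nat_ge a.toReal
    have ha2 : a ≤ (K:ℝ≥0∞) := by
      rw [← ENNReal.ofReal_toReal ha, ← ENNReal.ofReal_natCast]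
      exact ENNReal.ofReal_le_ofReal hK
    calc a = a ⊓ (K:ℝ≥0∞) := (inf_eq_left.mpr ha2).symm
      _ ≤ ⨆ K : ℕ, a ⊓ (K:ℝ≥0∞) := le_iSup (fun K : ℕ => a ⊓ (K:ℝ≥0∞)) K

lemma exists_local_minorant [CompactSpace Θ]
    (l' : Ω → Θ → ℝ) (m : ℝ)
    (hmeas : ∀ θ : Θ, Measurable fun ω => l' ω θ)
    (hlb : ∀ ω (θ : Θ), m ≤ l' ω θ)
    (hcont : ∀ᵐ ω ∂μ, Continuous (l' ω))
    (θ : Θ) (L₀ : ℝ) (hL₀m : m ≤ L₀)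
    (hgap : ENNReal.ofReal (L₀ - m) < ∫⁻ ω, ENNReal.ofReal (l' ω θ - m) ∂μ) :
    ∃ δ > 0, ∃ u : Ω → ℝ, Measurable u ∧ Integrable u μ ∧ L₀ < ∫ ω, u ω ∂μ ∧
      ∀ᵐ ω ∂μ, ∀ θ' ∈ Metric.ball θ δ, u ω ≤ l' ω θ' := by
  obtain ⟨D, hDc, hD⟩ := TopologicalSpace.exists_countable_dense Θ
  set V : ℝ → Ω → ℝ≥0∞ :=
    fun r ω => ⨅ p ∈ D ∩ Metric.ball θ r, ENNReal.ofReal (l' ω p - m) with hV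
  have hVmeas : ∀ r, Measurable (V r) := by
    intro r
    exact Measurable.biInf _ (hDc.mono Set.inter_subset_left)
      fun p _ => ((hmeas p).sub measurable_const).ennreal_ofReal
  -- key1 : V r ω ≤ ofReal (l' ω θ' - m) for θ' in the ball
  have key1 : ∀ ω, Continuous (l' ω) → ∀ r, 0 < r → ∀ θ' ∈ Metric.ball θ r,
      V r ω ≤ ENNReal.ofReal (l' ω θ' - m) := by
    intro ω hc r hr θ' hθ'
    refine ENNReal.le_of_forall_pos_le_add fun ε hε _ => ?_
    have hεR : (0:ℝ) < (ε:ℝ) := by exact_mod_cast hε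
    obtain ⟨r₀, hr₀, hc0⟩ := Metric.continuous_iff.mp hc θ' (ε:ℝ) hεR
    have hθ'd : dist θ' θ < r := Metric.mem_ball.mp hθ'
    set r₁ := min r₀ (r - dist θ' θ) with hr₁def
    have hr₁ : 0 < r₁ := lt_min hr₀ (by linarith)
    obtain ⟨p, hpmem⟩ := Metric.dense_iff.mp hD θ' r₁ hr₁
    obtain ⟨hpball, hpD⟩ := hpmem
    have hpd : dist p θ' < r₁ := Metric.mem_ball.mp hpball
    have hpθ : p ∈ Metric.ball θ r := by
      rw [Metric.mem_ball]
      have h3 := dist_triangle p θ' θ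
      have h4 : r₁ ≤ r - dist θ' θ := min_le_right _ _
      linarith
    have hval : l' ω p - m ≤ (l' ω θ' - m) + (ε:ℝ) := by
      have h5 := hc0 p (lt_of_lt_of_le hpd (min_le_left _ _))
      rw [Real.dist_eq] at h5
      have h6 := abs_lt.mp h5
      linarith [h6.2]
    calc V r ω ≤ ENNReal.ofReal (l' ω p - m) := iInf₂_le p ⟨hpD, hpθ⟩
      _ ≤ ENNReal.ofReal ((l' ω θ' - m) + (ε:ℝ)) := ENNReal.ofReal_le_ofReal hval
      _ = ENNReal.ofReal (l' ω θ' - m) + ENNReal.ofReal (ε:ℝ) :=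
          ENNReal.ofReal_add (by linarith [hlb ω θ']) hεR.le
      _ = ENNReal.ofReal (l' ω θ' - m) + (ε : ℝ≥0∞) := by rw [ENNReal.ofReal_coe_nnreal]
  -- key2 : sup over shrinking balls recovers the value at θ
  have key2 : ∀ ω, Continuous (l' ω) →
      ENNReal.ofReal (l' ω θ - m) ≤ ⨆ k : ℕ, V (1/(k+1)) ω := by
    intro ω hc
    refine ENNReal.le_of_forall_pos_le_add fun ε hε _ => ?_
    have hεR : (0:ℝ) < (ε:ℝ) := by exact_mod_cast hε
    obtain ⟨r₀, hr₀, hc0⟩ := Metric.continuous_iff.mp hc θ (ε:ℝ) hεR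
    obtain ⟨k, hk⟩ := exists_nat_one_div_lt hr₀
    have hVk : ENNReal.ofReal (l' ω θ - m - (ε:ℝ)) ≤ V (1/(k+1)) ω := by
      refine le_iInf₂ fun p hp => ?_
      have hpd : dist p θ < r₀ := lt_trans (Metric.mem_ball.mp hp.2) hk
      have h5 := hc0 p hpd
      rw [Real.dist_eq] at h5
      have h6 := abs_lt.mp h5
      exact ENNReal.ofReal_le_ofReal (by linarith [h6.1])
    have h7 : ENNReal.ofReal (l' ω θ - m) ≤
        ENNReal.ofReal (l' ω θ - m - (ε:ℝ)) + ENNReal.ofReal (ε:ℝ) := by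
      rw [ENNReal.ofReal_sub _ hεR.le]
      exact le_tsub_add
    refine h7.trans ?_
    rw [ENNReal.ofReal_coe_nnreal]
    exact add_le_add (hVk.trans (le_iSup (fun k : ℕ => V (1/(k+1)) ω) k)) le_rfl
  -- monotone in k
  have hmono : ∀ ω, Monotone fun k : ℕ => V (1/(k+1)) ω := by
    intro ω k k' hkk'
    refine biInf_mono fun p hp => ?_
    refine ⟨hp.1, ?_⟩
    have hle : (1:ℝ)/(k'+1) ≤ 1/(k+1) := by
      apply one_div_le_one_div_of_le (by positivity)
      exact_mod_cast Nat.succ_le_succ hkk'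
    exact Set.mem_of_mem_of_subset hp.2 (Metric.ball_subset_ball hle)
  -- MCT : sup of lintegrals
  have hMCT : ⨆ k : ℕ, ∫⁻ ω, V (1/(k+1)) ω ∂μ = ∫⁻ ω, ENNReal.ofReal (l' ω θ - m) ∂μ := by
    rw [← lintegral_iSup' (fun k => (hVmeas _).aemeasurable) (Eventually.of_forall hmono)]
    refine lintegral_congr_ae ?_
    filter_upwards [hcont] with ω hc
    refine le_antisymm (iSup_le fun k => ?_) (key2 ω hc)
    exact key1 ω hc _ (by positivity) θ (Metric.mem_ball_self (by positivity))
  obtain ⟨k, hkgap⟩ : ∃ k : ℕ, ENNReal.ofReal (L₀ - m) < ∫⁻ ω, V (1/(k+1)) ω ∂μ := by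
    rw [← hMCT] at hgap
    exact lt_iSup_iff.mp hgap
  -- truncation
  obtain ⟨K, hKgap⟩ : ∃ K : ℕ, ENNReal.ofReal (L₀ - m) <
      ∫⁻ ω, V (1/(k+1)) ω ⊓ (K:ℝ≥0∞) ∂μ := by
    have htr : ⨆ K : ℕ, ∫⁻ ω, V (1/(k+1)) ω ⊓ (K:ℝ≥0∞) ∂μ = ∫⁻ ω, V (1/(k+1)) ω ∂μ := by
      rw [← lintegral_iSup' (fun K => ((hVmeas _).min measurable_const).aemeasurable)
        (Eventually.of_forall fun ω K K' hKK' => by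
          exact inf_le_inf_left _ (by exact_mod_cast Nat.cast_le.mpr hKK'))]
      refine lintegral_congr fun ω => ennreal_iSup_inf_nat _
    rw [← htr] at hkgap
    exact lt_iSup_iff.mp hkgap
  set u : Ω → ℝ := fun ω => m + (V (1/(k+1)) ω ⊓ (K:ℝ≥0∞)).toReal with hu
  have humeas : Measurable u :=
    measurable_const.add ((hVmeas _).min measurable_const).ennreal_toReal
  have hbdd : ∀ ω, (V (1/(k+1)) ω ⊓ (K:ℝ≥0∞)).toReal ≤ (K:ℝ) := by
    intro ω
    have : (V (1/(k+1)) ω ⊓ (K:ℝ≥0∞)) ≤ (K:ℝ≥0∞) := inf_le_right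
    have h8 := ENNReal.toReal_mono (by simp) this
    simpa using h8
  have hnn : ∀ ω, 0 ≤ (V (1/(k+1)) ω ⊓ (K:ℝ≥0∞)).toReal := fun ω => ENNReal.toReal_nonneg
  have huint : Integrable u μ := by
    refine (integrable_const (|m| + K)).mono' humeas.aestronglyMeasurable ?_
    refine Eventually.of_forall fun ω => ?_
    rw [hu, Real.norm_eq_abs]
    have h1 := hbdd ω; have h2 := hnn ω
    rw [abs_le]
    constructor <;> [skip; skip] <;> cases abs_cases m <;> linarith
  have hulow : L₀ < ∫ ω, u ω ∂μ := by
    have hfin : ∫⁻ ω, V (1/(k+1)) ω ⊓ (K:ℝ≥0∞) ∂μ ≠ ⊤ := by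
      refine ne_of_lt (lt_of_le_of_lt (lintegral_mono fun ω => inf_le_right) ?_)
      rw [lintegral_const]
      simp [ENNReal.natCast_lt_top]
    have hIu : ∫ ω, u ω ∂μ = m + (∫⁻ ω, V (1/(k+1)) ω ⊓ (K:ℝ≥0∞) ∂μ).toReal := by
      rw [hu]
      rw [integral_add (integrable_const m)]
      · congr 1
        · simp
        · exact integral_toReal ((hVmeas _).min measurable_const).aemeasurable
            (Eventually.of_forall fun ω => lt_of_le_of_lt inf_le_right (ENNReal.natCast_lt_top K))
      · exact (integrable_const ((K:ℝ))).mono' (((hVmeas _).min measurable_const).ennreal_toReal).aestronglyMeasurable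
          (Eventually.of_forall fun ω => by rw [Real.norm_eq_abs, abs_of_nonneg (hnn ω)]; exact hbdd ω)
    rw [hIu]
    have := (ENNReal.ofReal_lt_iff_lt_toReal (by linarith) hfin).mp hKgap
    linarith
  refine ⟨1/(k+1), by positivity, u, humeas, huint, hulow, ?_⟩
  filter_upwards [hcont] with ω hc θ' hθ'
  have h9 : V (1/(k+1)) ω ⊓ (K:ℝ≥0∞) ≤ ENNReal.ofReal (l' ω θ' - m) :=
    le_trans inf_le_left (key1 ω hc _ (by positivity) θ' hθ')
  have h10 := ENNReal.toReal_mono ENNReal.ofReal_ne_top h9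
  rw [ENNReal.toReal_ofReal (by linarith [hlb ω θ'])] at h10
  rw [hu]
  simp only
  linarith

end Wald


/-- Generic strong consistency of the QMLE on a continuously invertible domain
(Theorem 1 of the paper in M-estimation form): under a.e. continuity of the limit
criterion, a uniform lower bound, integrability at `θ₀`, identifiability (with the
expectation at `θ ≠ θ₀` possibly `+∞`, expressed via the lower integral of the shifted
nonnegative integrand), and uniform Cesàro approximation of the stationary ergodic
criterion by the observed one, any sequence of measurable minimizers of the observed
criterion converges a.s. to `θ₀`. -/
theorem qmle_strong_consistency
    {Θ : Type*} [MetricSpace Θ] [CompactSpace Θ] [MeasurableSpace Θ] [BorelSpace Θ]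
    {Ω : Type*} [MeasurableSpace Ω] (μ : Measure Ω) [IsProbabilityMeasure μ]
    (T : Ω → Ω) (hT : Ergodic T μ) (θ₀ : Θ)
    (l : Ω → Θ → ℝ)
    (hlmeas : ∀ θ, Measurable fun ω => l ω θ)
    (hlcont : ∀ᵐ ω ∂μ, Continuous (l ω))
    (m : ℝ) (hlb : ∀ᵐ ω ∂μ, ∀ θ, m ≤ l ω θ)
    (hint : Integrable (fun ω => l ω θ₀) μ)
    (hident : ∀ θ, θ ≠ θ₀ →
      ENNReal.ofReal (∫ ω, (l ω θ₀ - m) ∂μ) < ∫⁻ ω, ENNReal.ofReal (l ω θ - m) ∂μ)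
    (lhat : ℕ → Ω → Θ → ℝ)
    (hlhatcont : ∀ t ω, Continuous (lhat t ω))
    (happrox : ∀ᵐ ω ∂μ, Tendsto
      (fun n : ℕ => ⨆ θ, (n : ℝ)⁻¹ * ∑ t ∈ Finset.Icc 1 n, |lhat t ω θ - l (T^[t] ω) θ|)
      atTop (nhds 0))
    (θhat : ℕ → Ω → Θ) (hθmeas : ∀ n, Measurable (θhat n))
    (hmin : ∀ n ω, ∀ θ : Θ, ∑ t ∈ Finset.Icc 1 n, lhat t ω (θhat n ω) ≤
      ∑ t ∈ Finset.Icc 1 n, lhat t ω θ) :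
    ∀ᵐ ω ∂μ, Tendsto (fun n => θhat n ω) atTop (nhds θ₀) := by
  -- replace l by its truncation l' = max l m, which is bounded below everywhere
  set l' : Ω → Θ → ℝ := fun ω θ => max (l ω θ) m with hl'
  have hl'meas : ∀ θ, Measurable fun ω => l' ω θ := fun θ => (hlmeas θ).max measurable_const
  have hl'lb : ∀ ω θ, m ≤ l' ω θ := fun ω θ => le_max_right _ _
  have hl'cont : ∀ᵐ ω ∂μ, Continuous (l' ω) :=
    hlcont.mono fun ω hc => hc.max continuous_const
  have hl'eq : ∀ᵐ ω ∂μ, ∀ θ, l' ω θ = l ω θ :=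
    hlb.mono fun ω h θ => max_eq_left (h θ)
  have hint' : Integrable (fun ω => l' ω θ₀) μ :=
    hint.congr (hl'eq.mono fun ω h => (h θ₀).symm)
  set L₀ := ∫ ω, l' ω θ₀ ∂μ with hL₀
  have hL₀m : m ≤ L₀ := by
    have := integral_mono (integrable_const m) hint' (fun ω => hl'lb ω θ₀)
    simpa using this
  have hidentL : ∀ θ, θ ≠ θ₀ →
      ENNReal.ofReal (L₀ - m) < ∫⁻ ω, ENNReal.ofReal (l' ω θ - m) ∂μ := by
    intro θ hθ
    have h1 : ∫ ω, (l ω θ₀ - m) ∂μ = L₀ - m := by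
      rw [integral_sub hint (integrable_const m)]
      have : ∫ ω, l ω θ₀ ∂μ = L₀ := integral_congr_ae (hl'eq.mono fun ω h => (h θ₀).symm)
      rw [this]
      simp
    have h2 : ∫⁻ ω, ENNReal.ofReal (l' ω θ - m) ∂μ = ∫⁻ ω, ENNReal.ofReal (l ω θ - m) ∂μ :=
      lintegral_congr_ae (hl'eq.mono fun ω h => by simp only [h θ])
    rw [h2, ← h1]
    exact hident θ hθ
  -- main step : for every ε > 0, a.s. eventually dist (θhat n ω) θ₀ < ε
  have main : ∀ ε : ℝ, 0 < ε → ∀ᵐ ω ∂μ, ∀ᶠ n in atTop, dist (θhat n ω) θ₀ < ε := by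
    intro ε hε
    set Kset : Set Θ := {θ | ε ≤ dist θ θ₀} with hKset
    by_cases hKne : Kset.Nonempty
    swap
    · refine Eventually.of_forall fun ω => Eventually.of_forall fun n => ?_
      by_contra hcon
      exact hKne ⟨θhat n ω, not_lt.mp hcon⟩
    have hKcl : IsClosed Kset := isClosed_le continuous_const (Continuous.dist continuous_id continuous_const)
    have hKcp : IsCompact Kset := hKcl.isCompact
    -- choose local minorants
    have hchoice : ∀ i : Kset, ∃ δ > 0, ∃ u : Ω → ℝ, Measurable u ∧ Integrable u μ ∧
        L₀ < ∫ ω, u ω ∂μ ∧ ∀ᵐ ω ∂μ, ∀ θ' ∈ Metric.ball (i:Θ) δ, u ω ≤ l' ω θ' := by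
      rintro ⟨θ, hθ⟩
      have hne : θ ≠ θ₀ := by
        intro h
        rw [hKset] at hθ
        simp only [Set.mem_setOf_eq, h, dist_self] at hθ
        linarith
      exact exists_local_minorant l' m hl'meas hl'lb hl'cont θ L₀ hL₀m (hidentL θ hne)
    choose δ hδ u humeas huint huI hub using hchoice
    -- finite subcover
    obtain ⟨t, ht⟩ := hKcp.elim_finite_subcover (fun i : Kset => Metric.ball (i:Θ) (δ i))
      (fun i => Metric.isOpen_ball) (fun x hx => Set.mem_iUnion.mpr ⟨⟨x, hx⟩, Metric.mem_ball_self (hδ ⟨x, hx⟩)⟩)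
    have htne : t.Nonempty := by
      obtain ⟨x, hx⟩ := hKne
      obtain ⟨i, hi, _⟩ := Set.mem_iUnion₂.mp (ht hx)
      exact ⟨i, hi⟩
    set η : ℝ := t.inf' htne (fun i => ∫ ω, u i ω ∂μ - L₀) with hη
    have hηpos : 0 < η := by
      rw [hη, Finset.lt_inf'_iff]
      exact fun i _ => by linarith [huI i]
    have hηle : ∀ i ∈ t, η ≤ ∫ ω, u i ω ∂μ - L₀ := fun i hi => Finset.inf'_le _ hi
    -- the a.e. good set
    have hBu : ∀ᵐ ω ∂μ, ∀ i ∈ t, Tendsto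
        (fun n : ℕ => (n:ℝ)⁻¹ * ∑ s ∈ Finset.Icc 1 n, u i (T^[s] ω)) atTop (nhds (∫ ω, u i ω ∂μ)) := by
      rw [eventually_all_finset]
      exact fun i _ => birkhoff_shifted hT (humeas i) (huint i)
    have hB0 : ∀ᵐ ω ∂μ, Tendsto
        (fun n : ℕ => (n:ℝ)⁻¹ * ∑ s ∈ Finset.Icc 1 n, l' (T^[s] ω) θ₀) atTop (nhds L₀) :=
      birkhoff_shifted hT (hl'meas θ₀) hint'
    have hEq : ∀ᵐ ω ∂μ, ∀ s : ℕ, ∀ θ, l' (T^[s] ω) θ = l (T^[s] ω) θ := by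
      rw [ae_all_iff]
      exact fun s => ae_comp_iterate hT.toMeasurePreserving hl'eq s
    have hCont : ∀ᵐ ω ∂μ, ∀ s : ℕ, Continuous (l' (T^[s] ω)) := by
      rw [ae_all_iff]
      exact fun s => ae_comp_iterate hT.toMeasurePreserving hl'cont s
    have hUb : ∀ᵐ ω ∂μ, ∀ s : ℕ, ∀ i ∈ t, ∀ θ' ∈ Metric.ball (i:Θ) (δ i),
        u i (T^[s] ω) ≤ l' (T^[s] ω) θ' := by
      rw [ae_all_iff]
      intro s
      refine ae_comp_iterate hT.toMeasurePreserving
        (p := fun ω' => ∀ i ∈ t, ∀ θ' ∈ Metric.ball (i:Θ) (δ i), u i ω' ≤ l' ω' θ') ?_ s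
      rw [eventually_all_finset]
      exact fun i _ => hub i
    filter_upwards [hBu, hB0, hEq, hCont, hUb, happrox] with ω hωu hω0 hωeq hωcont hωub hωap
    -- eventual bounds
    have ea : ∀ᶠ n : ℕ in atTop, ∀ i ∈ t,
        L₀ + 3*η/4 < (n:ℝ)⁻¹ * ∑ s ∈ Finset.Icc 1 n, u i (T^[s] ω) := by
      rw [eventually_all_finset]
      intro i hi
      refine (hωu i hi).eventually (eventually_gt_nhds ?_)
      have := hηle i hi
      linarith
    have eb : ∀ᶠ n : ℕ in atTop,
        (n:ℝ)⁻¹ * ∑ s ∈ Finset.Icc 1 n, l' (T^[s] ω) θ₀ < L₀ + η/8 :=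
      hω0.eventually (eventually_lt_nhds (by linarith))
    have ec : ∀ᶠ n : ℕ in atTop,
        (⨆ θ, (n:ℝ)⁻¹ * ∑ s ∈ Finset.Icc 1 n, |lhat s ω θ - l (T^[s] ω) θ|) < η/8 :=
      hωap.eventually (eventually_lt_nhds (by linarith))
    filter_upwards [ea, eb, ec] with n ha hb hc
    by_contra hcon
    have hmem : θhat n ω ∈ Kset := not_lt.mp hcon
    obtain ⟨i, hi, hball⟩ := Set.mem_iUnion₂.mp (ht hmem)
    -- abbreviations
    set θh := θhat n ω with hθh
    have hinv : (0:ℝ) ≤ (n:ℝ)⁻¹ := by positivity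
    -- D θ ≤ sup
    have hDle : ∀ θ : Θ,
        (n:ℝ)⁻¹ * ∑ s ∈ Finset.Icc 1 n, |lhat s ω θ - l' (T^[s] ω) θ| < η/8 := by
      intro θ
      have heqD : (fun θ : Θ => (n:ℝ)⁻¹ * ∑ s ∈ Finset.Icc 1 n, |lhat s ω θ - l' (T^[s] ω) θ|)
          = fun θ : Θ => (n:ℝ)⁻¹ * ∑ s ∈ Finset.Icc 1 n, |lhat s ω θ - l (T^[s] ω) θ| := by
        funext θ
        congr 1
        exact Finset.sum_congr rfl fun s _ => by rw [hωeq s θ]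
      have hcontD : Continuous (fun θ : Θ =>
          (n:ℝ)⁻¹ * ∑ s ∈ Finset.Icc 1 n, |lhat s ω θ - l' (T^[s] ω) θ|) := by
        refine continuous_const.mul ?_
        refine continuous_finset_sum _ fun s _ => ?_
        exact Continuous.abs ((hlhatcont s ω).sub (hωcont s))
      have hbdd : BddAbove (Set.range (fun θ : Θ =>
          (n:ℝ)⁻¹ * ∑ s ∈ Finset.Icc 1 n, |lhat s ω θ - l' (T^[s] ω) θ|)) :=
        (isCompact_range hcontD).bddAbove
      have hle := le_ciSup hbdd θ
      have : (⨆ θ : Θ, (n:ℝ)⁻¹ * ∑ s ∈ Finset.Icc 1 n, |lhat s ω θ - l' (T^[s] ω) θ|)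
          = ⨆ θ : Θ, (n:ℝ)⁻¹ * ∑ s ∈ Finset.Icc 1 n, |lhat s ω θ - l (T^[s] ω) θ| := by
        rw [heqD]
      rw [this] at hle
      exact lt_of_le_of_lt hle hc
    -- |A θ - B θ| ≤ D θ
    have hAB : ∀ θ : Θ,
        |(n:ℝ)⁻¹ * ∑ s ∈ Finset.Icc 1 n, lhat s ω θ
          - (n:ℝ)⁻¹ * ∑ s ∈ Finset.Icc 1 n, l' (T^[s] ω) θ|
        ≤ (n:ℝ)⁻¹ * ∑ s ∈ Finset.Icc 1 n, |lhat s ω θ - l' (T^[s] ω) θ| := by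
      intro θ
      rw [← mul_sub, abs_mul, abs_of_nonneg hinv, ← Finset.sum_sub_distrib]
      refine mul_le_mul_of_nonneg_left ?_ hinv
      exact Finset.abs_sum_le_sum_abs _ _
    -- minimizer inequality, averaged
    have hminavg : (n:ℝ)⁻¹ * ∑ s ∈ Finset.Icc 1 n, lhat s ω θh
        ≤ (n:ℝ)⁻¹ * ∑ s ∈ Finset.Icc 1 n, lhat s ω θ₀ :=
      mul_le_mul_of_nonneg_left (hmin n ω θ₀) hinv
    -- lower bound at θh via u i
    have hlower : (n:ℝ)⁻¹ * ∑ s ∈ Finset.Icc 1 n, u i (T^[s] ω)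
        ≤ (n:ℝ)⁻¹ * ∑ s ∈ Finset.Icc 1 n, l' (T^[s] ω) θh := by
      refine mul_le_mul_of_nonneg_left ?_ hinv
      exact Finset.sum_le_sum fun s _ => hωub s i hi θh hball
    have h1 := ha i hi
    have h2 := hDle θh
    have h3 := hDle θ₀
    have h4 := abs_le.mp (hAB θh)
    have h5 := abs_le.mp (hAB θ₀)
    linarith [h4.1, h4.2, h5.1, h5.2]
  -- conclude
  have hall := ae_all_iff.mpr (fun j : ℕ => main (1/(j+1)) (by positivity))
  filter_upwards [hall] with ω hω
  rw [Metric.tendsto_atTop]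
  intro ε hε
  obtain ⟨j, hj⟩ := exists_nat_one_div_lt hε
  obtain ⟨N, hN⟩ := eventually_atTop.mp (hω j)
  exact ⟨N, fun n hn => lt_trans (hN n hn) hj⟩
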